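/- Let (r, s) and (r′, s′) be two pairs of integers with r, r′ ≥ 1, gcd(r,s) = gcd(r′,s′) = 1 and (r, s) ≠ (r′, s′). Then the Dieudonné K-modules N_{r,s} and N_{r′,s′} are not isomorphic: there is no bijective 𝒦-linear map α : 𝒦^r → 𝒦^{r′} with α ∘ φ_{r,s} = φ_{r′,s′} ∘ α. -/

import Mathlib

/- STATEMENT 5: For (r,s) ≠ (r′,s′) with r, r′ ≥ 1 and gcd(r,s) = gcd(r′,s′) = 1, the Dieudonné
K-modules N_{r,s} and N_{r′,s′} are not isomorphic: there is no bijective 𝒦-linear map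
α : 𝒦^r → 𝒦^{r′} with α ∘ φ_{r,s} = φ_{r′,s′} ∘ α. -/

noncomputable section

set_option maxHeartbeats 1000000
set_option synthInstance.maxHeartbeats 1000000

/-- The uniformizer `π` of `k⟦π⟧`, viewed inside the Laurent series field `𝒦 = k⸨π⸩`. -/
def piL (k : Type*) [Field k] : LaurentSeries k := HahnSeries.single (1 : ℤ) (1 : k)

/-- The `σ`-semilinear map `φ_{r,s}` on `𝒦^r`, given by
`φ_{r,s}(a₀, …, a_{r-1}) = (π^s · σ(a_{r-1}), σ(a₀), …, σ(a_{r-2}))`. -/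
def phiRS {k : Type*} [Field k] (σ : LaurentSeries k ≃+* LaurentSeries k) (r : ℕ) (s : ℤ)
    (a : Fin r → LaurentSeries k) : Fin r → LaurentSeries k := fun i =>
  if _h : (i : ℕ) = 0 then piL k ^ s * σ (a ⟨r - 1, by have := i.isLt; omega⟩)
  else σ (a ⟨(i : ℕ) - 1, by have := i.isLt; omega⟩)

namespace NRSaux

variable {k : Type*} [Field k]

lemma piL_zpow (s : ℤ) : piL k ^ s = HahnSeries.single s (1 : k) :=
  (RatFunc.single_zpow s).symm

lemma coeff_piL_zpow_mul (s : ℤ) (x : LaurentSeries k) (n : ℤ) :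
    (piL k ^ s * x).coeff n = x.coeff (n - s) := by
  rw [piL_zpow]
  have h : n = (n - s) + s := by ring
  conv_lhs => rw [h]
  rw [HahnSeries.coeff_single_mul_add, one_mul]

lemma sigma_pi (σ : LaurentSeries k ≃+* LaurentSeries k) (Q : ℕ) (hQ : Q ≠ 0)
    (hσ : ∀ (x : LaurentSeries k) (n : ℤ), (σ x).coeff n = x.coeff n ^ Q) :
    σ (piL k) = piL k := by
  ext n
  rw [hσ]
  unfold piL
  rw [HahnSeries.coeff_single]
  split_ifs
  · exact one_pow Q
  · exact zero_pow hQ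

lemma sigma_zpow (σ : LaurentSeries k ≃+* LaurentSeries k)
    (hσpi : σ (piL k) = piL k) (s : ℤ) : σ (piL k ^ s) = piL k ^ s := by
  rw [map_zpow₀, hσpi]

lemma iter_coeff (σ : LaurentSeries k ≃+* LaurentSeries k) (Q : ℕ)
    (hσ : ∀ (x : LaurentSeries k) (n : ℤ), (σ x).coeff n = x.coeff n ^ Q) :
    ∀ (m : ℕ) (x : LaurentSeries k) (n : ℤ), (σ^[m] x).coeff n = x.coeff n ^ Q ^ m := by
  intro m
  induction m with
  | zero => intro x n; simp
  | succ m ih =>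
    intro x n
    rw [Function.iterate_succ_apply', hσ, ih, ← pow_mul, ← pow_succ]

lemma phi_iter (σ : LaurentSeries k ≃+* LaurentSeries k)
    (hσpi : σ (piL k) = piL k) (r : ℕ) (s : ℤ) (v : Fin r → LaurentSeries k) :
    ∀ n, n ≤ r → ∀ j (hj : j < r),
      (phiRS σ r s)^[n] v ⟨j, hj⟩ =
        if _h : j < n then
          piL k ^ s * σ^[n] (v ⟨j + r - n, by omega⟩)
        else σ^[n] (v ⟨j - n, by omega⟩) := by
  intro n
  induction n with
  | zero =>
    intro _ j hj
    simp
  | succ n ih =>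
    intro hn j hj
    rw [Function.iterate_succ_apply']
    have ihh := ih (by omega)
    by_cases h0 : j = 0
    · rw [show ((phiRS σ r s) ((phiRS σ r s)^[n] v)) ⟨j, hj⟩ =
          piL k ^ s * σ ((phiRS σ r s)^[n] v ⟨r - 1, by omega⟩) from by
        simp only [phiRS]; rw [dif_pos h0]]
      rw [ihh (r - 1) (by omega), dif_neg (by omega), dif_pos (by omega),
        Function.iterate_succ_apply']
      have hidx : r - 1 - n = j + r - (n + 1) := by omega
      simp only [hidx]
    · rw [show ((phiRS σ r s) ((phiRS σ r s)^[n] v)) ⟨j, hj⟩ =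
          σ ((phiRS σ r s)^[n] v ⟨j - 1, by omega⟩) from by
        simp only [phiRS]; rw [dif_neg h0]]
      rw [ihh (j - 1) (by omega)]
      by_cases hlt : j - 1 < n
      · rw [dif_pos hlt, map_mul, sigma_zpow σ hσpi, dif_pos (by omega),
          Function.iterate_succ_apply']
        have hidx : j - 1 + r - n = j + r - (n + 1) := by omega
        simp only [hidx]
      · rw [dif_neg hlt, dif_neg (by omega), Function.iterate_succ_apply']
        have hidx : j - 1 - n = j - (n + 1) := by omega
        simp only [hidx]

lemma phi_iter_full (σ : LaurentSeries k ≃+* LaurentSeries k)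
    (hσpi : σ (piL k) = piL k) (r : ℕ) (s : ℤ) (v : Fin r → LaurentSeries k) (i : Fin r) :
    (phiRS σ r s)^[r] v i = piL k ^ s * σ^[r] (v i) := by
  have h := phi_iter σ hσpi r s v r le_rfl i.val i.isLt
  rw [dif_pos i.isLt] at h
  have hidx : (i : ℕ) + r - r = (i : ℕ) := by omega
  simp only [hidx, Fin.eta] at h
  exact h

end NRSaux

theorem NRS_pairwise_nonisomorphic
    (p e : ℕ) [Fact p.Prime] (he : 0 < e)
    (k : Type*) [Field k] [IsAlgClosed k] [CharP k p]
    (σ : LaurentSeries k ≃+* LaurentSeries k)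
    (hσ : ∀ (x : LaurentSeries k) (n : ℤ), (σ x).coeff n = x.coeff n ^ p ^ e)
    (r r' : ℕ) (hr : 1 ≤ r) (hr' : 1 ≤ r') (s s' : ℤ)
    (hrs : Int.gcd (r : ℤ) s = 1) (hrs' : Int.gcd (r' : ℤ) s' = 1)
    (hne : (r, s) ≠ (r', s')) :
    ¬ ∃ α : (Fin r → LaurentSeries k) ≃ₗ[LaurentSeries k] (Fin r' → LaurentSeries k),
        ∀ a, α (phiRS σ r s a) = phiRS σ r' s' (α a) := by
  rintro ⟨α, hint⟩
  have hQ : p ^ e ≠ 0 := pow_ne_zero e (Nat.Prime.ne_zero Fact.out)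
  -- dimensions must agree
  have hrr : r = r' := by
    have h1 := α.finrank_eq
    simpa [Module.finrank_pi] using h1
  subst hrr
  have hss : s ≠ s' := by
    intro h
    exact hne (by rw [h])
  have hσpi : σ (piL k) = piL k := NRSaux.sigma_pi σ (p ^ e) hQ hσ
  -- iterate the intertwining relation
  have hiter : ∀ n a, α ((phiRS σ r s)^[n] a) = (phiRS σ r s')^[n] (α a) := by
    intro n
    induction n with
    | zero => intro a; simp
    | succ n ih =>
      intro a
      rw [Function.iterate_succ_apply', Function.iterate_succ_apply', hint, ih]
  -- the all-ones vector
  set one : Fin r → LaurentSeries k := fun _ => 1 with hone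
  have hsig1 : ∀ m : ℕ, σ^[m] (1 : LaurentSeries k) = 1 := by
    intro m
    induction m with
    | zero => simp
    | succ m ih => rw [Function.iterate_succ_apply', ih, map_one]
  have hL : (phiRS σ r s)^[r] one = (piL k ^ s) • one := by
    funext i
    rw [NRSaux.phi_iter_full σ hσpi r s one i]
    simp [hone, hsig1]
  have hone_ne : one ≠ 0 := by
    intro h
    have := congrFun h ⟨0, hr⟩
    simp [hone] at this
  have hαone_ne : α one ≠ 0 := by
    intro h
    exact hone_ne (by simpa using α.map_eq_zero_iff.mp (by simpa using h))
  obtain ⟨i, hx⟩ : ∃ i, α one i ≠ 0 := by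
    by_contra h
    push_neg at h
    exact hαone_ne (funext fun i => h i)
  set x : LaurentSeries k := α one i with hxdef
  -- key scalar equation
  have hkey : piL k ^ s * x = piL k ^ s' * σ^[r] x := by
    have h1 := hiter r one
    rw [hL, map_smul] at h1
    have h2 := congrFun h1 i
    rw [NRSaux.phi_iter_full σ hσpi r s' (α one) i] at h2
    simpa [hxdef] using h2
  -- coefficient comparison
  have hc : ∀ n : ℤ, x.coeff (n - s) = (x.coeff (n - s')) ^ (p ^ e) ^ r := by
    intro n
    have := congrArg (fun z : LaurentSeries k => z.coeff n) hkey
    simpa [NRSaux.coeff_piL_zpow_mul, NRSaux.iter_coeff σ (p ^ e) hσ r x] using this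
  have hQR : (p ^ e) ^ r ≠ 0 := pow_ne_zero r hQ
  have hordne := mt HahnSeries.coeff_order_eq_zero.mp hx
  rcases lt_or_gt_of_ne hss with hlt | hgt
  · -- s < s' : evaluate at n = x.order + s
    have h := hc (x.order + s)
    rw [show x.order + s - s = x.order by ring] at h
    rw [HahnSeries.coeff_eq_zero_of_lt_order (by omega : x.order + s - s' < x.order)] at h
    rw [zero_pow hQR] at h
    exact hordne h
  · -- s' < s : evaluate at n = x.order + s'
    have h := hc (x.order + s')
    rw [show x.order + s' - s' = x.order by ring] at h
    rw [HahnSeries.coeff_eq_zero_of_lt_order (by omega : x.order + s' - s < x.order)] at h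
    exact pow_ne_zero _ hordne h.symm
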